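/- Let K/ℚ be a quadratic field extension, c ∈ ℚ, d ≥ 2, and let (z₀, …, z_{N−1}) ⊆ K be a cycle of exact period N of φ(z) = z^d + c. Suppose there exist 0 < i < N and a nontrivial σ ∈ Gal(K/ℚ) with φ^i(z₀) = σ(z₀). Then the trace of the cycle, z₀ + z₁ + ⋯ + z_{N−1}, is a rational number. -/

import Mathlib

open IntermediateField

/-- In a quadratic extension of ℚ, any element fixed by a nontrivial
automorphism is rational. -/
lemma fixed_of_quad (K : Type*) [Field K] [CharZero K]
    (hquad : Module.finrank ℚ K = 2)
    (σ : K ≃ₐ[ℚ] K) (hσ : σ ≠ 1) (x : K) (hx : σ x = x) :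
    ∃ q : ℚ, x = (q : K) := by
  have hfd : FiniteDimensional ℚ K := by
    apply FiniteDimensional.of_finrank_pos
    rw [hquad]; norm_num
  by_contra hq
  push_neg at hq
  have hxint : IsIntegral ℚ x := Algebra.IsIntegral.isIntegral x
  -- x is not in the bottom intermediate field
  have hxb : x ∉ (⊥ : IntermediateField ℚ K) := by
    intro h
    rw [IntermediateField.mem_bot] at h
    obtain ⟨q, hq'⟩ := h
    exact hq q hq'.symm
  have hne : ℚ⟮x⟯ ≠ ⊥ := by
    intro h
    exact hxb (h ▸ IntermediateField.mem_adjoin_simple_self ℚ x)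
  have hdvd : Module.finrank ℚ ℚ⟮x⟯ ∣ 2 := by
    rw [← hquad, IntermediateField.adjoin.finrank hxint]
    exact minpoly.degree_dvd hxint
  have h1 : Module.finrank ℚ ℚ⟮x⟯ ≠ 1 := fun h =>
    hne (IntermediateField.finrank_eq_one_iff.mp h)
  have h2 : Module.finrank ℚ ℚ⟮x⟯ = 2 := by
    rcases (Nat.dvd_prime Nat.prime_two).mp hdvd with h | h
    · exact absurd h h1
    · exact h
  have htop : ℚ⟮x⟯ = ⊤ := by
    apply IntermediateField.eq_of_le_of_finrank_eq le_top
    rw [h2, IntermediateField.finrank_top', hquad]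
  -- the subalgebra adjoin is also top
  have hatop : Algebra.adjoin ℚ ({x} : Set K) = ⊤ := by
    have := IntermediateField.adjoin_simple_toSubalgebra_of_isAlgebraic hxint.isAlgebraic
    rw [htop] at this
    rw [← this]
    rfl
  have : σ = 1 := by
    have h := AlgHom.ext_of_adjoin_eq_top (B := K) hatop
      (φ₁ := σ.toAlgHom) (φ₂ := (1 : K ≃ₐ[ℚ] K).toAlgHom) ?_
    · ext y
      have := congrArg (fun f : K →ₐ[ℚ] K => f y) h
      simpa using this
    · intro y hy
      rw [Set.mem_singleton_iff] at hy
      subst hy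
      simpa using hx
  exact hσ this

theorem stmt_4_aux_iter (K : Type*) [Field K] (d : ℕ) (c : ℚ)
    (N : ℕ) [NeZero N] (z : ZMod N → K)
    (hcycle : ∀ k : ZMod N, (z k) ^ d + (c : K) = z (k + 1)) :
    ∀ (n : ℕ) (k : ZMod N),
      (fun w : K => w ^ d + (c : K))^[n] (z k) = z (k + n) := by
  intro n
  induction n with
  | zero => intro k; simp
  | succ m ih =>
      intro k
      rw [Function.iterate_succ_apply', ih k, hcycle]
      push_cast
      ring_nf

/-- For a quadratic field K and a cycle of exact period N of φ(z) = z^d + c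
satisfying Property A, the trace of the cycle is rational. -/
theorem stmt_4 (K : Type*) [Field K] [CharZero K]
    (hquad : Module.finrank ℚ K = 2)
    (d : ℕ) (hd : 2 ≤ d) (c : ℚ) (N : ℕ) (hN : 0 < N) [NeZero N]
    (z : ZMod N → K)
    (hcycle : ∀ k : ZMod N, (z k) ^ d + (c : K) = z (k + 1))
    (hdist : Function.Injective z)
    (i : ℕ) (hi : 0 < i ∧ i < N) (σ : K ≃ₐ[ℚ] K) (hσ : σ ≠ 1)
    (hA : (fun w : K => w ^ d + (c : K))^[i] (z 0) = σ (z 0)) :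
    ∃ q : ℚ, (∑ k : ZMod N, z k) = (q : K) := by
  set φ : K → K := fun w : K => w ^ d + (c : K) with hφ
  have hiter := stmt_4_aux_iter K d c N z hcycle
  -- σ commutes with φ
  have hcomm : ∀ x : K, σ (φ x) = φ (σ x) := by
    intro x
    simp only [hφ, map_add, map_pow]
    congr 1
    exact σ.commutes c
  have hcommit : ∀ (n : ℕ) (x : K), σ (φ^[n] x) = φ^[n] (σ x) := by
    intro n
    induction n with
    | zero => intro x; simp
    | succ m ih =>
        intro x
        rw [Function.iterate_succ_apply', Function.iterate_succ_apply',
          hcomm, ih]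
  -- σ (z k) = z (k + i)
  have hσz : ∀ k : ZMod N, σ (z k) = z (k + i) := by
    intro k
    have hk : z k = φ^[k.val] (z 0) := by
      rw [hiter k.val 0, zero_add, ZMod.natCast_val, ZMod.cast_id]
    rw [hk, hcommit, ← hA, ← Function.iterate_add_apply, hiter, zero_add,
      Nat.cast_add, ZMod.natCast_val, ZMod.cast_id, add_comm]
  -- the sum is fixed by σ
  have hfix : σ (∑ k : ZMod N, z k) = ∑ k : ZMod N, z k := by
    rw [map_sum]
    simp_rw [hσz]
    exact Fintype.sum_equiv (Equiv.addRight (i : ZMod N)) _ _ (fun k => rfl)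
  obtain ⟨q, hq⟩ := fixed_of_quad K hquad σ hσ _ hfix
  exact ⟨q, hq⟩
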